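/- Let θ₁,…,θ_k and π be random variables, S a random dataset depending on them, and A(S) a post-processing of S. Let S_j denote the sub-dataset of examples from cluster j. Then I(A(S); S | θ_{1:k}) ≥ ∑_{j=1}^k I(A(S); S_j | θ_j), assuming the (S_j, θ_j) pairs are mutually independent across j conditioned on the cluster-index assignment. -/

import Mathlib

open scoped BigOperators

/-- `p` is a probability mass function. -/
def IsPMF {M : Type*} [Fintype M] (p : M → ℝ) : Prop :=
  (∀ y, 0 ≤ p y) ∧ ∑ y, p y = 1

/-- Conditional mutual information `I(S;M | T)` of a joint pmf on `T × S × M`. -/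
noncomputable def condMI {T S M : Type*} [Fintype T] [Fintype S] [Fintype M]
    (j : T × S × M → ℝ) : ℝ :=
  ∑ t, ∑ s, ∑ m, j (t, s, m) *
    Real.log ((j (t, s, m) * (∑ s', ∑ m', j (t, s', m'))) /
      ((∑ m', j (t, s, m')) * (∑ s', j (t, s', m))))

section Helpers

lemma pi_sum_prod {k : ℕ} {E : Fin k → Type*} [∀ j, Fintype (E j)]
    (f : (j : Fin k) → E j → ℝ) :
    ∑ z : (j : Fin k) → E j, ∏ j, f j (z j) = ∏ j, ∑ x, f j x :=
  (Fintype.prod_sum f).symm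

lemma pi_sum_ite {k : ℕ} {E : Fin k → Type*} [∀ j, Fintype (E j)]
    [∀ j, DecidableEq (E j)]
    (f : (j : Fin k) → E j → ℝ) (j0 : Fin k) (e : E j0)
    (hf : ∀ j, j ≠ j0 → ∑ x, f j x = 1) :
    ∑ z : (j : Fin k) → E j, (if z j0 = e then ∏ j, f j (z j) else 0) = f j0 e := by
  have hstep : ∀ z : (j : Fin k) → E j,
      (if z j0 = e then ∏ j, f j (z j) else 0)
        = ∏ j, (if h : j = j0 then (if h ▸ z j = e then f j (z j) else 0) else f j (z j)) := by
    intro z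
    by_cases hz : z j0 = e
    · rw [if_pos hz]
      refine Finset.prod_congr rfl fun j _ => ?_
      by_cases hj : j = j0
      · subst hj; simp [hz]
      · simp [hj]
    · rw [if_neg hz]
      symm
      apply Finset.prod_eq_zero (Finset.mem_univ j0)
      simp [hz]
  rw [Finset.sum_congr rfl fun z _ => hstep z]
  rw [pi_sum_prod (fun j x => if h : j = j0 then (if h ▸ x = e then f j x else 0) else f j x)]
  rw [← Finset.mul_prod_erase Finset.univ _ (Finset.mem_univ j0)]
  have h1 : ∑ x, (if h : j0 = j0 then (if h ▸ x = e then f j0 x else 0) else f j0 x)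
      = f j0 e := by
    simp only [dif_pos rfl]
    simp [Finset.sum_ite_eq' Finset.univ e (f j0)]
  rw [h1]
  have h2 : ∏ j ∈ Finset.univ.erase j0,
      (∑ x, if h : j = j0 then (if h ▸ x = e then f j x else 0) else f j x) = 1 := by
    apply Finset.prod_eq_one
    intro j hj
    have hjne : j ≠ j0 := (Finset.mem_erase.mp hj).1
    simp only [dif_neg hjne]
    exact hf j hjne
  rw [h2, mul_one]

lemma gibbs {I : Type*} [Fintype I] (p r : I → ℝ) (hp : ∀ i, 0 ≤ p i)
    (hpr : ∀ i, 0 < p i → 0 < r i) (hp1 : ∑ i, p i = 1) (hr0 : ∀ i, 0 ≤ r i)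
    (hr1 : ∑ i, r i ≤ 1) :
    0 ≤ ∑ i, p i * Real.log (p i / r i) := by
  have key : ∀ i, p i - r i ≤ p i * Real.log (p i / r i) := by
    intro i
    rcases eq_or_lt_of_le (hp i) with h | h
    · rw [← h]; simpa using hr0 i
    · have hri := hpr i h
      have hlog : Real.log (r i / p i) ≤ r i / p i - 1 :=
        Real.log_le_sub_one_of_pos (div_pos hri h)
      have hinv : Real.log (p i / r i) = - Real.log (r i / p i) := by
        rw [← Real.log_inv]; congr 1; field_simp
      rw [hinv]
      have h2 : 1 - r i / p i ≤ -Real.log (r i / p i) := by linarith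
      calc p i - r i = p i * (1 - r i / p i) := by field_simp
        _ ≤ p i * (-Real.log (r i / p i)) :=
            mul_le_mul_of_nonneg_left h2 (le_of_lt h)
  calc (0:ℝ) = 1 - 1 := by ring
    _ ≤ ∑ i, p i - ∑ i, r i := by linarith
    _ = ∑ i, (p i - r i) := (Finset.sum_sub_distrib _ _).symm
    _ ≤ _ := Finset.sum_le_sum fun i _ => key i

lemma logid {k : ℕ} {a A B C : ℝ} {q Aj Bj Cj : Fin k → ℝ}
    (ha : 0 < a) (hC : 0 < C) (hq : ∀ j, 0 < q j) (hAj : ∀ j, 0 < Aj j)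
    (hBj : ∀ j, 0 < Bj j) (hCj : ∀ j, 0 < Cj j)
    (hA : A = ∏ j, Aj j) (hB : B = ∏ j, Bj j) :
    Real.log (a * A / (B * C)) - ∑ j, Real.log (q j * Aj j / (Bj j * Cj j))
      = Real.log (a / (C * ∏ j, (q j / Cj j))) := by
  have hApos : 0 < A := hA ▸ Finset.prod_pos fun j _ => hAj j
  have hBpos : 0 < B := hB ▸ Finset.prod_pos fun j _ => hBj j
  have hprod : 0 < ∏ j, (q j / Cj j) := Finset.prod_pos fun j _ => div_pos (hq j) (hCj j)
  have e1 : ∀ j : Fin k, Real.log (q j * Aj j / (Bj j * Cj j))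
      = Real.log (q j) + Real.log (Aj j) - (Real.log (Bj j) + Real.log (Cj j)) := by
    intro j
    rw [Real.log_div (mul_pos (hq j) (hAj j)).ne' (mul_pos (hBj j) (hCj j)).ne',
      Real.log_mul (hq j).ne' (hAj j).ne', Real.log_mul (hBj j).ne' (hCj j).ne']
  have e2 : ∀ j : Fin k, Real.log (q j / Cj j) = Real.log (q j) - Real.log (Cj j) :=
    fun j => Real.log_div (hq j).ne' (hCj j).ne'
  rw [Real.log_div (mul_pos ha hApos).ne' (mul_pos hBpos hC).ne',
    Real.log_mul ha.ne' hApos.ne', Real.log_mul hBpos.ne' hC.ne',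
    Real.log_div ha.ne' (mul_pos hC hprod).ne', Real.log_mul hC.ne' hprod.ne',
    Real.log_prod (fun j _ => (div_pos (hq j) (hCj j)).ne'),
    Finset.sum_congr rfl fun j _ => e2 j,
    Finset.sum_congr rfl fun j _ => e1 j,
    hA, hB, Real.log_prod (fun j _ => (hAj j).ne'),
    Real.log_prod (fun j _ => (hBj j).ne')]
  simp only [Finset.sum_sub_distrib, Finset.sum_add_distrib]
  ring

lemma sum_pair {α : Type*} {β : Type*} [Fintype α] [Fintype β] (F : α → β → ℝ) :
    ∑ a, ∑ b, F a b = ∑ p : α × β, F p.1 p.2 :=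
  (Fintype.sum_prod_type (f := fun p : α × β => F p.1 p.2)).symm

lemma sum3 {α β γ : Type*} [Fintype α] [Fintype β] [Fintype γ] (f : α → β → γ → ℝ) :
    ∑ x : α × β × γ, f x.1 x.2.1 x.2.2 = ∑ a, ∑ b, ∑ c, f a b c := by
  rw [Fintype.sum_prod_type]
  exact Finset.sum_congr rfl fun a _ => Fintype.sum_prod_type _

end Helpers

section Aux

set_option linter.unusedSectionVars false

variable {Θ : Type*} [Fintype Θ] [DecidableEq Θ] {Mc : Type*} [Fintype Mc]
  {k : ℕ} {D : Fin k → Type*} [∀ j, Fintype (D j)] [∀ j, DecidableEq (D j)]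

/-- The joint distribution of `(θ, S, M)`. -/
noncomputable def Pfun (pj : (j : Fin k) → Θ × D j → ℝ)
    (κ : ((j : Fin k) → D j) → Mc → ℝ)
    (θ : Fin k → Θ) (s : (j : Fin k) → D j) (m : Mc) : ℝ :=
  (∏ j, pj j (θ j, s j)) * κ s m

/-- The joint distribution of `(θ_j, S_j, M)`. -/
noncomputable def Qfun (pj : (j : Fin k) → Θ × D j → ℝ)
    (κ : ((j : Fin k) → D j) → Mc → ℝ)
    (j0 : Fin k) (t : Θ) (d : D j0) (m : Mc) : ℝ :=
  ∑ θv : Fin k → Θ, ∑ s : (j : Fin k) → D j,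
    if θv j0 = t ∧ s j0 = d then Pfun pj κ θv s m else 0

/-- The per-cluster log-term of `condMI` of `Qfun`. -/
noncomputable def Lgfun (pj : (j : Fin k) → Θ × D j → ℝ)
    (κ : ((j : Fin k) → D j) → Mc → ℝ)
    (j0 : Fin k) (t : Θ) (d : D j0) (m : Mc) : ℝ :=
  Real.log ((Qfun pj κ j0 t d m * (∑ d', ∑ m', Qfun pj κ j0 t d' m')) /
    ((∑ m', Qfun pj κ j0 t d m') * (∑ d', Qfun pj κ j0 t d' m)))

/-- The comparison (sub-)distribution in the Gibbs argument. -/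
noncomputable def Rfun (pj : (j : Fin k) → Θ × D j → ℝ)
    (κ : ((j : Fin k) → D j) → Mc → ℝ)
    (θ : Fin k → Θ) (s : (j : Fin k) → D j) (m : Mc) : ℝ :=
  (∑ s', Pfun pj κ θ s' m) *
    ∏ j, (Qfun pj κ j (θ j) (s j) m / ∑ d, Qfun pj κ j (θ j) d m)

variable {pj : (j : Fin k) → Θ × D j → ℝ} {κ : ((j : Fin k) → D j) → Mc → ℝ}

/-- Combining the `θ` and `s` coordinates. -/
def prodPiEquiv : ((Fin k → Θ) × ((j : Fin k) → D j)) ≃ ((j : Fin k) → Θ × D j) where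
  toFun p := fun j => (p.1 j, p.2 j)
  invFun z := (fun j => (z j).1, fun j => (z j).2)
  left_inv _ := rfl
  right_inv _ := rfl

lemma Pfun_nonneg (hpj : ∀ j, IsPMF (pj j)) (hκ : ∀ s, IsPMF (κ s))
    (θ : Fin k → Θ) (s : (j : Fin k) → D j) (m : Mc) : 0 ≤ Pfun pj κ θ s m :=
  mul_nonneg (Finset.prod_nonneg fun j _ => (hpj j).1 _) ((hκ s).1 m)

lemma Pfun_sum_m (hκ : ∀ s, IsPMF (κ s)) (θ : Fin k → Θ) (s : (j : Fin k) → D j) :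
    ∑ m, Pfun pj κ θ s m = ∏ j, pj j (θ j, s j) := by
  unfold Pfun
  rw [← Finset.mul_sum, (hκ s).2, mul_one]

lemma Pfun_sum_sm (hκ : ∀ s, IsPMF (κ s)) (θ : Fin k → Θ) :
    ∑ s, ∑ m, Pfun pj κ θ s m = ∏ j, ∑ d, pj j (θ j, d) := by
  rw [Finset.sum_congr rfl fun s _ => Pfun_sum_m hκ θ s]
  exact pi_sum_prod (fun j d => pj j (θ j, d))

lemma Pfun_total (hpj : ∀ j, IsPMF (pj j)) (hκ : ∀ s, IsPMF (κ s)) :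
    ∑ θ : Fin k → Θ, ∑ s : (j : Fin k) → D j, ∑ m, Pfun pj κ θ s m = 1 := by
  rw [Finset.sum_congr rfl fun θ _ => Pfun_sum_sm hκ θ]
  rw [pi_sum_prod (fun j t => ∑ d, pj j (t, d))]
  refine Finset.prod_eq_one fun j _ => ?_
  rw [← Fintype.sum_prod_type]
  exact (hpj j).2

lemma Qfun_nonneg (hpj : ∀ j, IsPMF (pj j)) (hκ : ∀ s, IsPMF (κ s))
    (j0 : Fin k) (t : Θ) (d : D j0) (m : Mc) : 0 ≤ Qfun pj κ j0 t d m := by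
  refine Finset.sum_nonneg fun θ _ => Finset.sum_nonneg fun s _ => ?_
  split
  · exact Pfun_nonneg hpj hκ θ s m
  · exact le_refl 0

lemma Pfun_le_Qfun (hpj : ∀ j, IsPMF (pj j)) (hκ : ∀ s, IsPMF (κ s))
    (θ : Fin k → Θ) (s : (j : Fin k) → D j) (m : Mc) (j0 : Fin k) :
    Pfun pj κ θ s m ≤ Qfun pj κ j0 (θ j0) (s j0) m := by
  unfold Qfun
  have h1 : Pfun pj κ θ s m
      ≤ ∑ s' : (j : Fin k) → D j,
          if θ j0 = θ j0 ∧ s' j0 = s j0 then Pfun pj κ θ s' m else 0 := by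
    have := Finset.single_le_sum
      (f := fun s' : (j : Fin k) → D j =>
        if θ j0 = θ j0 ∧ s' j0 = s j0 then Pfun pj κ θ s' m else 0)
      (fun s' _ => by
        split
        · exact Pfun_nonneg hpj hκ θ s' m
        · exact le_refl 0)
      (Finset.mem_univ s)
    simpa using this
  refine le_trans h1 ?_
  exact Finset.single_le_sum
    (f := fun θ' : Fin k → Θ =>
      ∑ s' : (j : Fin k) → D j,
        if θ' j0 = θ j0 ∧ s' j0 = s j0 then Pfun pj κ θ' s' m else 0)
    (fun θ' _ => Finset.sum_nonneg fun s' _ => by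
      split
      · exact Pfun_nonneg hpj hκ θ' s' m
      · exact le_refl 0)
    (Finset.mem_univ θ)

lemma Qfun_sum_m (hpj : ∀ j, IsPMF (pj j)) (hκ : ∀ s, IsPMF (κ s))
    (j0 : Fin k) (t : Θ) (d : D j0) :
    ∑ m, Qfun pj κ j0 t d m = pj j0 (t, d) := by
  unfold Qfun
  rw [Finset.sum_comm]
  rw [Finset.sum_congr rfl fun θ _ => Finset.sum_comm]
  have h1 : ∀ (θ : Fin k → Θ) (s : (j : Fin k) → D j),
      (∑ m, if θ j0 = t ∧ s j0 = d then Pfun pj κ θ s m else 0)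
        = (if θ j0 = t ∧ s j0 = d then ∏ j, pj j (θ j, s j) else 0) := by
    intro θ s
    split
    · exact Pfun_sum_m hκ θ s
    · simp
  rw [Finset.sum_congr rfl fun θ _ => Finset.sum_congr rfl fun s _ => h1 θ s]
  rw [sum_pair (fun (θ : Fin k → Θ) (s : (j : Fin k) → D j) =>
    if θ j0 = t ∧ s j0 = d then ∏ j, pj j (θ j, s j) else 0)]
  rw [Fintype.sum_equiv (prodPiEquiv (Θ := Θ) (D := D))
    _ (fun z => if z j0 = (t, d) then ∏ j, pj j (z j) else 0)
    (fun p => by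
      simp only [prodPiEquiv, Equiv.coe_fn_mk, Prod.mk.injEq])]
  exact pi_sum_ite pj j0 (t, d) (fun j _ => (hpj j).2)

lemma Rfun_nonneg (hpj : ∀ j, IsPMF (pj j)) (hκ : ∀ s, IsPMF (κ s))
    (θ : Fin k → Θ) (s : (j : Fin k) → D j) (m : Mc) : 0 ≤ Rfun pj κ θ s m :=
  mul_nonneg (Finset.sum_nonneg fun s' _ => Pfun_nonneg hpj hκ θ s' m)
    (Finset.prod_nonneg fun j _ => div_nonneg (Qfun_nonneg hpj hκ j (θ j) (s j) m)
      (Finset.sum_nonneg fun d _ => Qfun_nonneg hpj hκ j (θ j) d m))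

lemma Rfun_pos (hpj : ∀ j, IsPMF (pj j)) (hκ : ∀ s, IsPMF (κ s))
    {θ : Fin k → Θ} {s : (j : Fin k) → D j} {m : Mc}
    (h : 0 < Pfun pj κ θ s m) : 0 < Rfun pj κ θ s m := by
  refine mul_pos (lt_of_lt_of_le h (Finset.single_le_sum
    (fun s' _ => Pfun_nonneg hpj hκ θ s' m) (Finset.mem_univ s))) ?_
  refine Finset.prod_pos fun j _ => div_pos
    (lt_of_lt_of_le h (Pfun_le_Qfun hpj hκ θ s m j)) ?_
  exact lt_of_lt_of_le (lt_of_lt_of_le h (Pfun_le_Qfun hpj hκ θ s m j))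
    (Finset.single_le_sum (fun d _ => Qfun_nonneg hpj hκ j (θ j) d m)
      (Finset.mem_univ (s j)))

lemma Rfun_sum_le_one (hpj : ∀ j, IsPMF (pj j)) (hκ : ∀ s, IsPMF (κ s)) :
    ∑ θ : Fin k → Θ, ∑ s : (j : Fin k) → D j, ∑ m, Rfun pj κ θ s m ≤ 1 := by
  have hs : ∀ (θ : Fin k → Θ) (m : Mc),
      ∑ s, Rfun pj κ θ s m ≤ ∑ s, Pfun pj κ θ s m := by
    intro θ m
    have h1 : ∑ s, Rfun pj κ θ s m
        = (∑ s', Pfun pj κ θ s' m) *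
          ∏ j, ((∑ d, Qfun pj κ j (θ j) d m) / (∑ d, Qfun pj κ j (θ j) d m)) := by
      unfold Rfun
      rw [← Finset.mul_sum]
      congr 1
      rw [pi_sum_prod (fun j d => Qfun pj κ j (θ j) d m / ∑ d', Qfun pj κ j (θ j) d' m)]
      exact Finset.prod_congr rfl fun j _ => (Finset.sum_div _ _ _).symm
    rw [h1]
    calc (∑ s', Pfun pj κ θ s' m) *
          ∏ j, ((∑ d, Qfun pj κ j (θ j) d m) / (∑ d, Qfun pj κ j (θ j) d m))
        ≤ (∑ s', Pfun pj κ θ s' m) * 1 := by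
          refine mul_le_mul_of_nonneg_left ?_
            (Finset.sum_nonneg fun s' _ => Pfun_nonneg hpj hκ θ s' m)
          refine Finset.prod_le_one (fun j _ => div_nonneg ?_ ?_) (fun j _ => div_self_le_one _)
          · exact Finset.sum_nonneg fun d _ => Qfun_nonneg hpj hκ j (θ j) d m
          · exact Finset.sum_nonneg fun d _ => Qfun_nonneg hpj hκ j (θ j) d m
      _ = ∑ s, Pfun pj κ θ s m := mul_one _
  calc ∑ θ : Fin k → Θ, ∑ s : (j : Fin k) → D j, ∑ m, Rfun pj κ θ s m
      = ∑ θ : Fin k → Θ, ∑ m, ∑ s : (j : Fin k) → D j, Rfun pj κ θ s m :=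
        Finset.sum_congr rfl fun θ _ => Finset.sum_comm
    _ ≤ ∑ θ : Fin k → Θ, ∑ m, ∑ s : (j : Fin k) → D j, Pfun pj κ θ s m :=
        Finset.sum_le_sum fun θ _ => Finset.sum_le_sum fun m _ => hs θ m
    _ = ∑ θ : Fin k → Θ, ∑ s : (j : Fin k) → D j, ∑ m, Pfun pj κ θ s m :=
        Finset.sum_congr rfl fun θ _ => Finset.sum_comm
    _ = 1 := Pfun_total hpj hκ

lemma condMI_Q_rearrange (j0 : Fin k) :
    (∑ t, ∑ d, ∑ m, Qfun pj κ j0 t d m * Lgfun pj κ j0 t d m)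
      = ∑ θ : Fin k → Θ, ∑ s : (j : Fin k) → D j, ∑ m,
          Pfun pj κ θ s m * Lgfun pj κ j0 (θ j0) (s j0) m := by
  have h1 : ∀ (t : Θ) (d : D j0) (m : Mc), Qfun pj κ j0 t d m * Lgfun pj κ j0 t d m
      = ∑ w : (Fin k → Θ) × ((j : Fin k) → D j),
          (if w.1 j0 = t ∧ w.2 j0 = d
            then Pfun pj κ w.1 w.2 m * Lgfun pj κ j0 t d m else 0) := by
    intro t d m
    unfold Qfun
    rw [sum_pair (fun (θv : Fin k → Θ) (s : (j : Fin k) → D j) =>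
      if θv j0 = t ∧ s j0 = d then Pfun pj κ θv s m else 0), Finset.sum_mul]
    exact Finset.sum_congr rfl fun w _ => by rw [ite_mul, zero_mul]
  calc (∑ t, ∑ d, ∑ m, Qfun pj κ j0 t d m * Lgfun pj κ j0 t d m)
      = ∑ t, ∑ d, ∑ m, ∑ w : (Fin k → Θ) × ((j : Fin k) → D j),
          (if w.1 j0 = t ∧ w.2 j0 = d
            then Pfun pj κ w.1 w.2 m * Lgfun pj κ j0 t d m else 0) :=
        Finset.sum_congr rfl fun t _ => Finset.sum_congr rfl fun d _ =>
          Finset.sum_congr rfl fun m _ => h1 t d m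
    _ = ∑ y : Θ × D j0 × Mc, ∑ w : (Fin k → Θ) × ((j : Fin k) → D j),
          (if w.1 j0 = y.1 ∧ w.2 j0 = y.2.1
            then Pfun pj κ w.1 w.2 y.2.2 * Lgfun pj κ j0 y.1 y.2.1 y.2.2 else 0) :=
        (sum3 (fun t d m => ∑ w : (Fin k → Θ) × ((j : Fin k) → D j),
          (if w.1 j0 = t ∧ w.2 j0 = d
            then Pfun pj κ w.1 w.2 m * Lgfun pj κ j0 t d m else 0))).symm
    _ = ∑ w : (Fin k → Θ) × ((j : Fin k) → D j), ∑ y : Θ × D j0 × Mc,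
          (if w.1 j0 = y.1 ∧ w.2 j0 = y.2.1
            then Pfun pj κ w.1 w.2 y.2.2 * Lgfun pj κ j0 y.1 y.2.1 y.2.2 else 0) :=
        Finset.sum_comm
    _ = ∑ w : (Fin k → Θ) × ((j : Fin k) → D j), ∑ m,
          Pfun pj κ w.1 w.2 m * Lgfun pj κ j0 (w.1 j0) (w.2 j0) m := by
        refine Finset.sum_congr rfl fun w _ => ?_
        rw [sum3 (fun t d m => if w.1 j0 = t ∧ w.2 j0 = d
          then Pfun pj κ w.1 w.2 m * Lgfun pj κ j0 t d m else 0)]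
        simp [ite_and, Finset.sum_ite_irrel, Finset.sum_ite_eq]
    _ = ∑ θ : Fin k → Θ, ∑ s : (j : Fin k) → D j, ∑ m,
          Pfun pj κ θ s m * Lgfun pj κ j0 (θ j0) (s j0) m :=
        (sum_pair (fun (θ : Fin k → Θ) (s : (j : Fin k) → D j) =>
          ∑ m, Pfun pj κ θ s m * Lgfun pj κ j0 (θ j0) (s j0) m)).symm

end Aux

/-- Superadditivity of memorization across clusters.  With cluster parameters
`θ₁,…,θ_k` i.i.d. and, conditioned on the (fixed) cluster-index assignment, the
sub-datasets `S_j` mutually independent across `j` with `(S_j, θ_j)` distributed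
according to per-cluster joints `pj j`, and `A(S)` a post-processing of the full dataset
`S = (S_1,…,S_k)`:  `I(A(S); S | θ_{1:k}) ≥ ∑_j I(A(S); S_j | θ_j)`. -/
theorem cmi_superadditive {Θ : Type*} [Fintype Θ] [DecidableEq Θ] {Mc : Type*} [Fintype Mc]
    (k : ℕ) (D : Fin k → Type*) [∀ j, Fintype (D j)] [∀ j, DecidableEq (D j)]
    (pj : (j : Fin k) → Θ × D j → ℝ) (hpj : ∀ j, IsPMF (pj j))
    (κ : ((j : Fin k) → D j) → Mc → ℝ) (hκ : ∀ s, IsPMF (κ s)) :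
    condMI (fun tsm : (Fin k → Θ) × ((j : Fin k) → D j) × Mc =>
        (∏ j, pj j (tsm.1 j, tsm.2.1 j)) * κ tsm.2.1 tsm.2.2)
      ≥ ∑ j0 : Fin k,
          condMI (fun tdm : Θ × D j0 × Mc =>
            ∑ θv : Fin k → Θ, ∑ s : (j : Fin k) → D j,
              (if θv j0 = tdm.1 ∧ s j0 = tdm.2.1 then
                (∏ j, pj j (θv j, s j)) * κ s tdm.2.2 else 0)) := by
  classical
  rw [ge_iff_le, ← sub_nonneg]
  have hQdef : ∀ j0 : Fin k,
      condMI (fun tdm : Θ × D j0 × Mc =>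
        ∑ θv : Fin k → Θ, ∑ s : (j : Fin k) → D j,
          (if θv j0 = tdm.1 ∧ s j0 = tdm.2.1 then
            (∏ j, pj j (θv j, s j)) * κ s tdm.2.2 else 0))
        = ∑ t, ∑ d, ∑ m, Qfun pj κ j0 t d m * Lgfun pj κ j0 t d m := fun j0 => rfl
  have hPdef : condMI (fun tsm : (Fin k → Θ) × ((j : Fin k) → D j) × Mc =>
        (∏ j, pj j (tsm.1 j, tsm.2.1 j)) * κ tsm.2.1 tsm.2.2)
      = ∑ θ : Fin k → Θ, ∑ s : (j : Fin k) → D j, ∑ m,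
          Pfun pj κ θ s m *
            Real.log ((Pfun pj κ θ s m * (∑ s', ∑ m', Pfun pj κ θ s' m')) /
              ((∑ m', Pfun pj κ θ s m') * (∑ s', Pfun pj κ θ s' m))) := rfl
  rw [hPdef, Finset.sum_congr rfl fun j0 _ =>
    (hQdef j0).trans (condMI_Q_rearrange j0)]
  have hswap : (∑ j0 : Fin k, ∑ θ : Fin k → Θ, ∑ s : (j : Fin k) → D j, ∑ m,
        Pfun pj κ θ s m * Lgfun pj κ j0 (θ j0) (s j0) m)
      = ∑ θ : Fin k → Θ, ∑ s : (j : Fin k) → D j, ∑ m, ∑ j0 : Fin k,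
        Pfun pj κ θ s m * Lgfun pj κ j0 (θ j0) (s j0) m := by
    rw [Finset.sum_comm]
    refine Finset.sum_congr rfl fun θ _ => ?_
    rw [Finset.sum_comm]
    exact Finset.sum_congr rfl fun s _ => Finset.sum_comm
  rw [hswap]
  simp only [← Finset.sum_sub_distrib, ← Finset.mul_sum, ← mul_sub]
  have hpoint : ∀ (θ : Fin k → Θ) (s : (j : Fin k) → D j) (m : Mc),
      Pfun pj κ θ s m *
          (Real.log ((Pfun pj κ θ s m * (∑ s', ∑ m', Pfun pj κ θ s' m')) /
              ((∑ m', Pfun pj κ θ s m') * (∑ s', Pfun pj κ θ s' m)))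
            - ∑ j0 : Fin k, Lgfun pj κ j0 (θ j0) (s j0) m)
        = Pfun pj κ θ s m * Real.log (Pfun pj κ θ s m / Rfun pj κ θ s m) := by
    intro θ s m
    rcases eq_or_lt_of_le (Pfun_nonneg hpj hκ θ s m) with h | h
    · rw [← h, zero_mul, zero_mul]
    · congr 1
      have hq : ∀ j, 0 < Qfun pj κ j (θ j) (s j) m :=
        fun j => lt_of_lt_of_le h (Pfun_le_Qfun hpj hκ θ s m j)
      have hCj : ∀ j, 0 < ∑ d', Qfun pj κ j (θ j) d' m :=
        fun j => lt_of_lt_of_le (hq j) (Finset.single_le_sum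
          (fun d _ => Qfun_nonneg hpj hκ j (θ j) d m) (Finset.mem_univ (s j)))
      have hBj : ∀ j, 0 < ∑ m', Qfun pj κ j (θ j) (s j) m' :=
        fun j => lt_of_lt_of_le (hq j) (Finset.single_le_sum
          (fun m' _ => Qfun_nonneg hpj hκ j (θ j) (s j) m') (Finset.mem_univ m))
      have hAj : ∀ j, 0 < ∑ d', ∑ m', Qfun pj κ j (θ j) d' m' :=
        fun j => lt_of_lt_of_le (hBj j) (Finset.single_le_sum
          (fun d _ => Finset.sum_nonneg fun m' _ => Qfun_nonneg hpj hκ j (θ j) d m')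
          (Finset.mem_univ (s j)))
      have hC : 0 < ∑ s', Pfun pj κ θ s' m :=
        lt_of_lt_of_le h (Finset.single_le_sum
          (fun s' _ => Pfun_nonneg hpj hκ θ s' m) (Finset.mem_univ s))
      have hA : (∑ s', ∑ m', Pfun pj κ θ s' m')
          = ∏ j, ∑ d', ∑ m', Qfun pj κ j (θ j) d' m' := by
        rw [Pfun_sum_sm hκ θ]
        refine Finset.prod_congr rfl fun j _ => ?_
        exact Finset.sum_congr rfl fun d _ => (Qfun_sum_m hpj hκ j (θ j) d).symm
      have hB : (∑ m', Pfun pj κ θ s m')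
          = ∏ j, ∑ m', Qfun pj κ j (θ j) (s j) m' := by
        rw [Pfun_sum_m hκ θ s]
        exact Finset.prod_congr rfl fun j _ => (Qfun_sum_m hpj hκ j (θ j) (s j)).symm
      have := logid (k := k) h hC hq hAj hBj hCj hA hB
      simpa only [Lgfun, Rfun] using this
  rw [Finset.sum_congr rfl fun θ _ => Finset.sum_congr rfl fun s _ =>
    Finset.sum_congr rfl fun m _ => hpoint θ s m]
  rw [← sum3 (fun (θ : Fin k → Θ) (s : (j : Fin k) → D j) (m : Mc) =>
    Pfun pj κ θ s m * Real.log (Pfun pj κ θ s m / Rfun pj κ θ s m))]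
  refine gibbs _ _ (fun i => Pfun_nonneg hpj hκ i.1 i.2.1 i.2.2)
    (fun i hi => Rfun_pos hpj hκ hi) ?_ (fun i => Rfun_nonneg hpj hκ i.1 i.2.1 i.2.2) ?_
  · rw [sum3 (fun (θ : Fin k → Θ) (s : (j : Fin k) → D j) (m : Mc) => Pfun pj κ θ s m)]
    exact Pfun_total hpj hκ
  · rw [sum3 (fun (θ : Fin k → Θ) (s : (j : Fin k) → D j) (m : Mc) => Rfun pj κ θ s m)]
    exact Rfun_sum_le_one hpj hκ
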